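/- arXiv:2011.06379 — 2 statements merged into one kernel-verified Lean document; each statement's English description precedes it below -/
import Mathlib

section
/- Let 0 < ε < 1. Every function f : ℂ × ℂ → ℂ that is holomorphic on the Hartogs figure H_ε extends holomorphically to the bidisk D: there exists F : ℂ × ℂ → ℂ holomorphic on D (i.e. DifferentiableOn ℂ F D) such that F = f on H_ε. -/
open Complex Metric Set MeasureTheory intervalIntegral

/-- The open unit bidisk in `ℂ × ℂ`. -/
def bidisk : Set (ℂ × ℂ) := {p | ‖p.1‖ < 1 ∧ ‖p.2‖ < 1}

/-- The Hartogs figure `H_ε` inside the bidisk. -/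
def hartogsFigure (ε : ℝ) : Set (ℂ × ℂ) :=
  {p | (‖p.1‖ < 1 ∧ ‖p.2‖ < 1) ∧
    (‖p.1‖ < ε ∨ ‖p.2‖ > 1 - ε)}

lemma isOpen_hartogsFigure (ε : ℝ) : IsOpen (hartogsFigure ε) := by
  have h1 : Continuous fun p : ℂ × ℂ => ‖p.1‖ :=
    continuous_norm.comp continuous_fst
  have h2 : Continuous fun p : ℂ × ℂ => ‖p.2‖ :=
    continuous_norm.comp continuous_snd
  have : hartogsFigure ε =
      ({p : ℂ × ℂ | ‖p.1‖ < 1} ∩ {p | ‖p.2‖ < 1}) ∩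
        ({p | ‖p.1‖ < ε} ∪ {p | 1 - ε < ‖p.2‖}) := by
    ext p
    simp only [hartogsFigure, mem_setOf_eq, mem_inter_iff, mem_union, gt_iff_lt]
  rw [this]
  exact (((isOpen_lt h1 continuous_const).inter (isOpen_lt h2 continuous_const)).inter
    ((isOpen_lt h1 continuous_const).union (isOpen_lt continuous_const h2)))

lemma clm_comp_fst_eq (T : (ℂ × ℂ) →L[ℂ] ℂ) :
    T.comp ((ContinuousLinearMap.fst ℂ ℂ ℂ).prod 0) =
      T (1, 0) • ContinuousLinearMap.fst ℂ ℂ ℂ := by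
  refine ContinuousLinearMap.ext fun q => ?_
  have h : ((ContinuousLinearMap.fst ℂ ℂ ℂ).prod 0) q = q.1 • ((1 : ℂ), (0 : ℂ)) := by
    simp [Prod.smul_mk]
  rw [ContinuousLinearMap.comp_apply, h, T.map_smul]
  simp only [ContinuousLinearMap.smul_apply, ContinuousLinearMap.coe_fst', smul_eq_mul]
  ring

/-- Joint differentiability of the Cauchy-type integral. -/
lemma hartogs_aux_diff (ε : ℝ) (hε0 : 0 < ε) (hε1 : ε < 1)
    (f : ℂ × ℂ → ℂ) (hf : DifferentiableOn ℂ f (hartogsFigure ε))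
    (z₀ w₀ : ℂ) (hz₀ : ‖z₀‖ < 1) (hw₀ : ‖w₀‖ < 1 - ε / 2) :
    DifferentiableAt ℂ (fun p : ℂ × ℂ => (2 * (Real.pi : ℂ) * Complex.I)⁻¹ •
      ∮ ζ in C(0, 1 - ε / 2), (ζ - p.2)⁻¹ • f (p.1, ζ)) (z₀, w₀) := by
  have hH : IsOpen (hartogsFigure ε) := isOpen_hartogsFigure ε
  have hfc : ContinuousOn f (hartogsFigure ε) := hf.continuousOn
  have hfa : ∀ p ∈ hartogsFigure ε, DifferentiableAt ℂ f p :=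
    fun p hp => hf.differentiableAt (hH.mem_nhds hp)
  rw [show ‖z₀‖ = ‖z₀‖ from rfl] at hz₀
  rw [show ‖w₀‖ = ‖w₀‖ from rfl] at hw₀
  obtain ⟨r, hr_def⟩ : ∃ r : ℝ, r = 1 - ε / 2 := ⟨_, rfl⟩
  rw [← hr_def] at hw₀ ⊢
  have hr0 : (0 : ℝ) < r := by rw [hr_def]; linarith
  have hrε : 1 - ε < r := by rw [hr_def]; linarith
  have hr1 : r < 1 := by rw [hr_def]; linarith
  obtain ⟨δ, hδ_def⟩ : ∃ δ : ℝ, δ = min ((1 - ‖z₀‖) / 4) ((r - ‖w₀‖) / 2) := ⟨_, rfl⟩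
  have hmin1 : δ ≤ (1 - ‖z₀‖) / 4 := hδ_def ▸ min_le_left _ _
  have hmin2 : δ ≤ (r - ‖w₀‖) / 2 := hδ_def ▸ min_le_right _ _
  have hδ0 : 0 < δ := hδ_def ▸ lt_min (by linarith) (by linarith)
  have hδz : ‖z₀‖ + 2 * δ < 1 := by linarith
  have hδw : ‖w₀‖ + 2 * δ ≤ r := by linarith
  set c : ℝ → ℂ := fun θ => circleMap 0 r θ with hc_def
  have hcnorm : ∀ θ, ‖c θ‖ = r := fun θ => by
    rw [hc_def]
    simp only [norm_circleMap_zero, _root_.abs_of_nonneg hr0.le]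
  have hcc : Continuous c := continuous_circleMap 0 r
  have hcsp : ∀ θ, c θ ∈ sphere (0 : ℂ) r := fun θ => circleMap_mem_sphere _ hr0.le θ
  have hmem : ∀ z : ℂ, ‖z‖ < 1 → ∀ θ, (z, c θ) ∈ hartogsFigure ε := by
    intro z hz θ
    refine ⟨⟨hz, ?_⟩, Or.inr ?_⟩
    · show ‖c θ‖ < 1; rw [show ‖c θ‖ = ‖c θ‖ from rfl, hcnorm]; exact hr1
    · show 1 - ε < ‖c θ‖
      rw [show ‖c θ‖ = ‖c θ‖ from rfl, hcnorm]; exact hrε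
  -- uniform bound on f on a compact set
  obtain ⟨M, hM⟩ : ∃ M, ∀ q ∈ closedBall z₀ (2 * δ) ×ˢ sphere (0 : ℂ) r, ‖f q‖ ≤ M := by
    refine ((isCompact_closedBall z₀ (2 * δ)).prod
      (isCompact_sphere 0 r)).exists_bound_of_continuousOn (hfc.mono ?_)
    rintro ⟨z, ζ⟩ ⟨hz, hζ⟩
    have hz2 : ‖z - z₀‖ ≤ 2 * δ := mem_closedBall_iff_norm.1 hz
    have hz1 : ‖z‖ < 1 := by have := norm_sub_norm_le z z₀; linarith
    have hζr : ‖ζ‖ = r := by simpa using mem_sphere_zero_iff_norm.1 hζ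
    refine ⟨⟨hz1, ?_⟩, Or.inr ?_⟩
    · show ‖ζ‖ < 1; rw [show ‖ζ‖ = ‖ζ‖ from rfl, hζr]; exact hr1
    · show 1 - ε < ‖ζ‖; rw [show ‖ζ‖ = ‖ζ‖ from rfl, hζr]; exact hrε
  have hMnn : 0 ≤ M :=
    le_trans (norm_nonneg _) (hM (z₀, c 0) ⟨mem_closedBall_self (by positivity), hcsp 0⟩)
  -- derivative of circleMap
  set m : ℝ → ℂ := fun θ => deriv (circleMap 0 r) θ with hm_def
  have hmc : Continuous m := by
    have h : m = fun θ => circleMap 0 r θ * Complex.I := funext fun θ => deriv_circleMap 0 r θ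
    rw [h]; exact hcc.mul continuous_const
  have hmnorm : ∀ θ, ‖m θ‖ = r := fun θ => by
    rw [hm_def]
    simp only [deriv_circleMap, norm_mul, norm_circleMap_zero, Complex.norm_I,
      mul_one, _root_.abs_of_nonneg hr0.le]
  set Gg : (ℂ × ℂ) → ℝ → ℂ := fun p θ => m θ * ((c θ - p.2)⁻¹ * f (p.1, c θ)) with hGg_def
  set F' : (ℂ × ℂ) → ℝ → (ℂ × ℂ) →L[ℂ] ℂ := fun p θ =>
    m θ • ((c θ - p.2)⁻¹ • ((fderiv ℂ f (p.1, c θ) (1, 0)) • ContinuousLinearMap.fst ℂ ℂ ℂ)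
      + f (p.1, c θ) • (((c θ - p.2)⁻¹ ^ 2) • ContinuousLinearMap.snd ℂ ℂ ℂ)) with hF'_def
  -- facts about points of the ball
  have hfacts : ∀ p : ℂ × ℂ, p ∈ ball ((z₀, w₀) : ℂ × ℂ) δ →
      ‖p.1 - z₀‖ ≤ δ ∧ ‖p.1‖ < 1 ∧ ∀ θ, δ ≤ ‖c θ - p.2‖ := by
    intro p hp
    rw [mem_ball, Prod.dist_eq, max_lt_iff] at hp
    have h1 : ‖p.1 - z₀‖ < δ := by rw [← dist_eq_norm]; exact hp.1
    have h2 : ‖p.2 - w₀‖ < δ := by rw [← dist_eq_norm]; exact hp.2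
    refine ⟨h1.le, ?_, ?_⟩
    · have := norm_sub_norm_le p.1 z₀; linarith
    · intro θ
      have h3 : ‖p.2‖ ≤ ‖w₀‖ + δ := by have := norm_sub_norm_le p.2 w₀; linarith
      have h4 : ‖c θ‖ - ‖p.2‖ ≤ ‖c θ - p.2‖ := norm_sub_norm_le _ _
      rw [hcnorm θ] at h4; linarith
  -- Schwarz-type bound on the partial derivative in z
  have hDbound : ∀ (θ : ℝ), ∀ p ∈ ball ((z₀, w₀) : ℂ × ℂ) δ,
      ‖fderiv ℂ f (p.1, c θ) (1, 0)‖ ≤ (2 * M + 2) / δ := by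
    intro θ p hp
    obtain ⟨hp1, hp1', _⟩ := hfacts p hp
    have hgd : DifferentiableOn ℂ (fun z => f (z, c θ)) (ball p.1 δ) := by
      intro z hz
      have hz3 : ‖z - p.1‖ < δ := mem_ball_iff_norm.1 hz
      have hz2 : ‖z - z₀‖ ≤ 2 * δ := by
        have h := norm_sub_le_norm_sub_add_norm_sub z p.1 z₀
        linarith
      have hz1 : ‖z‖ < 1 := by have := norm_sub_norm_le z z₀; linarith
      exact ((hfa (z, c θ) (hmem z hz1 θ)).comp z
        (differentiableAt_id.prodMk (differentiableAt_const _))).differentiableWithinAt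
    have hmapsto : MapsTo (fun z => f (z, c θ)) (ball p.1 δ)
        (ball (f (p.1, c θ)) (2 * M + 2)) := by
      intro z hz
      have hz3 : ‖z - p.1‖ < δ := mem_ball_iff_norm.1 hz
      have hz2 : ‖z - z₀‖ ≤ 2 * δ := by
        have h := norm_sub_le_norm_sub_add_norm_sub z p.1 z₀
        linarith
      have hb1 : ‖f (z, c θ)‖ ≤ M := hM (z, c θ) ⟨mem_closedBall_iff_norm.2 hz2, hcsp θ⟩
      have hb2 : ‖f (p.1, c θ)‖ ≤ M := hM (p.1, c θ)
        ⟨mem_closedBall_iff_norm.2 (by linarith), hcsp θ⟩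
      rw [mem_ball, dist_eq_norm]
      calc ‖f (z, c θ) - f (p.1, c θ)‖ ≤ ‖f (z, c θ)‖ + ‖f (p.1, c θ)‖ := norm_sub_le _ _
        _ ≤ M + M := add_le_add hb1 hb2
        _ < 2 * M + 2 := by linarith
    have hder := Complex.norm_deriv_le_div_of_mapsTo_ball hgd (hmapsto.mono_right ball_subset_closedBall) hδ0
    have hEq : HasDerivAt (fun z => f (z, c θ)) (fderiv ℂ f (p.1, c θ) (1, 0)) p.1 :=
      (hfa _ (hmem p.1 hp1' θ)).hasFDerivAt.comp_hasDerivAt p.1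
        ((hasDerivAt_id p.1).prodMk (hasDerivAt_const p.1 (c θ)))
    rw [← hEq.deriv]
    exact hder
  -- derivative of the integrand
  have key : ∀ (θ : ℝ), ∀ p ∈ ball ((z₀, w₀) : ℂ × ℂ) δ,
      HasFDerivAt (fun q => Gg q θ) (F' p θ) p := by
    intro θ p hp
    obtain ⟨hp1, hp1', hlow⟩ := hfacts p hp
    have hne : c θ - p.2 ≠ 0 := by
      intro h
      have h2 := hlow θ
      rw [h, norm_zero] at h2; linarith
    have hq : HasFDerivAt (fun q : ℂ × ℂ => c θ - q.2)
        (0 - ContinuousLinearMap.snd ℂ ℂ ℂ) p :=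
      (hasFDerivAt_const (c θ) p).sub hasFDerivAt_snd
    have hu : HasFDerivAt (fun q : ℂ × ℂ => (c θ - q.2)⁻¹)
        (((c θ - p.2)⁻¹ ^ 2) • ContinuousLinearMap.snd ℂ ℂ ℂ) p := by
      have h2 := (hasFDerivAt_inv hne).comp p hq
      refine h2.congr_fderiv (ContinuousLinearMap.ext fun q => ?_)
      simp only [ContinuousLinearMap.smul_apply, ContinuousLinearMap.coe_snd',
        ContinuousLinearMap.coe_comp', Function.comp_apply, ContinuousLinearMap.sub_apply,
        ContinuousLinearMap.zero_apply, ContinuousLinearMap.smulRight_apply,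
        ContinuousLinearMap.one_apply, ContinuousLinearMap.toSpanSingleton_apply, smul_eq_mul, inv_pow]
      ring
    have hmemp : (p.1, c θ) ∈ hartogsFigure ε := hmem p.1 hp1' θ
    have hj : HasFDerivAt (fun q : ℂ × ℂ => (q.1, c θ))
        ((ContinuousLinearMap.fst ℂ ℂ ℂ).prod 0) p :=
      hasFDerivAt_fst.prodMk (hasFDerivAt_const (c θ) p)
    have hv : HasFDerivAt (fun q : ℂ × ℂ => f (q.1, c θ))
        ((fderiv ℂ f (p.1, c θ) (1, 0)) • ContinuousLinearMap.fst ℂ ℂ ℂ) p := by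
      have h2 := ((hfa _ hmemp).hasFDerivAt.comp p hj)
      rwa [clm_comp_fst_eq] at h2
    exact (hu.mul hv).const_mul (m θ)
  -- uniform bound on the derivative
  have hfst : ‖ContinuousLinearMap.fst ℂ ℂ ℂ‖ ≤ 1 :=
    ContinuousLinearMap.opNorm_le_bound _ zero_le_one fun q => by
      simpa using norm_fst_le q
  have hsnd : ‖ContinuousLinearMap.snd ℂ ℂ ℂ‖ ≤ 1 :=
    ContinuousLinearMap.opNorm_le_bound _ zero_le_one fun q => by
      simpa using norm_snd_le q
  set C : ℝ := r * (δ⁻¹ * ((2 * M + 2) / δ) + M * δ⁻¹ ^ 2) with hC_def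
  have hbound : ∀ (θ : ℝ), ∀ p ∈ ball ((z₀, w₀) : ℂ × ℂ) δ, ‖F' p θ‖ ≤ C := by
    intro θ p hp
    obtain ⟨hp1, hp1', hlow⟩ := hfacts p hp
    have hainv : ‖(c θ - p.2)⁻¹‖ ≤ δ⁻¹ := by
      rw [norm_inv]
      exact inv_anti₀ hδ0 (hlow θ)
    have hfb : ‖f (p.1, c θ)‖ ≤ M :=
      hM (p.1, c θ) ⟨mem_closedBall_iff_norm.2 (by linarith), hcsp θ⟩
    have hDb := hDbound θ p hp
    have t1 : ‖(c θ - p.2)⁻¹ • ((fderiv ℂ f (p.1, c θ)) (1, 0) •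
        ContinuousLinearMap.fst ℂ ℂ ℂ)‖ ≤ δ⁻¹ * ((2 * M + 2) / δ) := by
      refine (ContinuousLinearMap.opNorm_smul_le _ _).trans ?_
      refine mul_le_mul hainv ?_ (norm_nonneg _) (by positivity)
      refine (ContinuousLinearMap.opNorm_smul_le _ _).trans ?_
      calc ‖(fderiv ℂ f (p.1, c θ)) (1, 0)‖ * ‖ContinuousLinearMap.fst ℂ ℂ ℂ‖ ≤
          ((2 * M + 2) / δ) * 1 := mul_le_mul hDb hfst (norm_nonneg _) (by positivity)
        _ = (2 * M + 2) / δ := mul_one _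
    have t2 : ‖f (p.1, c θ) • (((c θ - p.2)⁻¹ ^ 2) • ContinuousLinearMap.snd ℂ ℂ ℂ)‖ ≤
        M * δ⁻¹ ^ 2 := by
      refine (ContinuousLinearMap.opNorm_smul_le _ _).trans ?_
      refine mul_le_mul hfb ?_ (norm_nonneg _) hMnn
      refine (ContinuousLinearMap.opNorm_smul_le _ _).trans ?_
      have h9 : ‖(c θ - p.2)⁻¹ ^ 2‖ ≤ δ⁻¹ ^ 2 := by
        rw [norm_pow]; exact pow_le_pow_left₀ (norm_nonneg _) hainv 2
      calc ‖(c θ - p.2)⁻¹ ^ 2‖ * ‖ContinuousLinearMap.snd ℂ ℂ ℂ‖ ≤ δ⁻¹ ^ 2 * 1 :=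
          mul_le_mul h9 hsnd (norm_nonneg _) (by positivity)
        _ = δ⁻¹ ^ 2 := mul_one _
    simp only [hF'_def]
    refine (ContinuousLinearMap.opNorm_smul_le _ _).trans ?_
    rw [hmnorm θ, hC_def]
    exact mul_le_mul_of_nonneg_left
      (le_trans (norm_add_le _ _) (add_le_add t1 t2)) hr0.le
  -- measurability
  have hcw : ∀ θ, c θ - w₀ ≠ 0 := by
    intro θ h
    have h2 : ‖c θ‖ = ‖w₀‖ := by rw [sub_eq_zero] at h; rw [h]
    rw [hcnorm θ] at h2
    have : ‖w₀‖ < r := by linarith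
    rw [← h2] at this; exact lt_irrefl _ this
  have hcontf0 : Continuous fun θ => f (z₀, c θ) :=
    hfc.comp_continuous (continuous_const.prodMk hcc) fun θ => hmem z₀ hz₀ θ
  have hF'meas : AEStronglyMeasurable (F' (z₀, w₀))
      (MeasureTheory.volume.restrict (Set.uIoc (0 : ℝ) (2 * Real.pi))) := by
    have hb : Measurable fun θ => fderiv ℂ f (z₀, c θ) ((1 : ℂ), (0 : ℂ)) :=
      (measurable_fderiv_apply_const ℂ f _).comp (continuous_const.prodMk hcc).measurable
    have h1 : StronglyMeasurable fun θ =>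
        (fderiv ℂ f (z₀, c θ) ((1 : ℂ), (0 : ℂ))) • ContinuousLinearMap.fst ℂ ℂ ℂ :=
      hb.stronglyMeasurable.smul stronglyMeasurable_const
    have h2 : StronglyMeasurable fun θ => ((c θ - w₀)⁻¹ : ℂ) :=
      ((hcc.sub continuous_const).inv₀ hcw).stronglyMeasurable
    have h3 : StronglyMeasurable fun θ => (c θ - w₀)⁻¹ •
        ((fderiv ℂ f (z₀, c θ) ((1 : ℂ), (0 : ℂ))) • ContinuousLinearMap.fst ℂ ℂ ℂ) :=
      h2.smul h1
    have h4 : StronglyMeasurable fun θ => f (z₀, c θ) •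
        (((c θ - w₀)⁻¹ ^ 2) • ContinuousLinearMap.snd ℂ ℂ ℂ) := by
      apply Continuous.stronglyMeasurable
      exact hcontf0.smul ((((hcc.sub continuous_const).inv₀ hcw).pow 2).smul continuous_const)
    have h5 : StronglyMeasurable (F' (z₀, w₀)) := by
      have : F' (z₀, w₀) = fun θ => m θ • ((c θ - w₀)⁻¹ •
          ((fderiv ℂ f (z₀, c θ) ((1 : ℂ), (0 : ℂ))) • ContinuousLinearMap.fst ℂ ℂ ℂ)
          + f (z₀, c θ) • (((c θ - w₀)⁻¹ ^ 2) • ContinuousLinearMap.snd ℂ ℂ ℂ)) := rfl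
      rw [this]
      exact hmc.stronglyMeasurable.smul (h3.add h4)
    exact h5.aestronglyMeasurable
  have hGcont : ∀ p ∈ ball ((z₀, w₀) : ℂ × ℂ) δ, Continuous fun θ => Gg p θ := by
    intro p hp
    obtain ⟨hp1, hp1', hlow⟩ := hfacts p hp
    have hnev : ∀ θ, c θ - p.2 ≠ 0 := by
      intro θ h
      have h2 := hlow θ
      rw [h, norm_zero] at h2; linarith
    exact hmc.mul (((hcc.sub continuous_const).inv₀ hnev).mul
      (hfc.comp_continuous (continuous_const.prodMk hcc) fun θ => hmem p.1 hp1' θ))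
  have hF_meas : ∀ᶠ p in nhds ((z₀, w₀) : ℂ × ℂ), AEStronglyMeasurable (Gg p)
      (MeasureTheory.volume.restrict (Set.uIoc (0 : ℝ) (2 * Real.pi))) := by
    filter_upwards [ball_mem_nhds _ hδ0] with p hp
    exact (hGcont p hp).aestronglyMeasurable
  have hF_int : IntervalIntegrable (Gg (z₀, w₀)) MeasureTheory.volume 0 (2 * Real.pi) :=
    (hGcont _ (mem_ball_self hδ0)).intervalIntegrable _ _
  have hfin := intervalIntegral.hasFDerivAt_integral_of_dominated_of_fderiv_le
    (F := Gg) (F' := F') (x₀ := ((z₀, w₀) : ℂ × ℂ)) (bound := fun _ => C)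
    (ball_mem_nhds _ hδ0) hF_meas hF_int hF'meas
    (MeasureTheory.ae_of_all _ fun θ _ p hp => hbound θ p hp)
    intervalIntegrable_const
    (MeasureTheory.ae_of_all _ fun θ _ p hp => key θ p hp)
  have h2 := hfin.const_smul ((2 * (Real.pi : ℂ) * Complex.I)⁻¹)
  have hfun : (fun p : ℂ × ℂ => (2 * (Real.pi : ℂ) * Complex.I)⁻¹ •
      ∮ ζ in C(0, r), (ζ - p.2)⁻¹ • f (p.1, ζ)) =
      fun p : ℂ × ℂ => (2 * (Real.pi : ℂ) * Complex.I)⁻¹ •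
        ∫ θ in (0 : ℝ)..2 * Real.pi, Gg p θ := by
    rfl
  rw [hfun]
  exact h2.differentiableAt

/-- Every function holomorphic on the Hartogs figure `H_ε` extends holomorphically
to the bidisk. -/
theorem hartogs_extension (ε : ℝ) (hε0 : 0 < ε) (hε1 : ε < 1)
    (f : ℂ × ℂ → ℂ) (hf : DifferentiableOn ℂ f (hartogsFigure ε)) :
    ∃ F : ℂ × ℂ → ℂ, DifferentiableOn ℂ F bidisk ∧
      Set.EqOn F f (hartogsFigure ε) := by
  classical
  set r : ℝ := 1 - ε / 2 with hr_def
  have hr0 : (0 : ℝ) < r := by rw [hr_def]; linarith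
  have hrε : 1 - ε < r := by rw [hr_def]; linarith
  have hr1 : r < 1 := by rw [hr_def]; linarith
  have hH : IsOpen (hartogsFigure ε) := isOpen_hartogsFigure ε
  have hfc : ContinuousOn f (hartogsFigure ε) := hf.continuousOn
  have hfa : ∀ p ∈ hartogsFigure ε, DifferentiableAt ℂ f p :=
    fun p hp => hf.differentiableAt (hH.mem_nhds hp)
  set F : ℂ × ℂ → ℂ := fun p => (2 * (Real.pi : ℂ) * Complex.I)⁻¹ •
      ∮ ζ in C(0, r), (ζ - p.2)⁻¹ • f (p.1, ζ) with hF_def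
  -- Step 1 : Cauchy formula region
  have hFf : ∀ z w : ℂ, ‖z‖ < ε → ‖w‖ < r → F (z, w) = f (z, w) := by
    intro z w h1 h2
    have hz1 : ‖z‖ < 1 := h1.trans hε1
    have hw : w ∈ ball (0 : ℂ) r := by
      simpa [mem_ball_zero_iff] using h2
    have hcont : ContinuousOn (fun ζ : ℂ => f (z, ζ)) (closedBall (0 : ℂ) r) := by
      refine hfc.comp (Continuous.continuousOn (by fun_prop)) ?_
      intro ζ hζ
      have hζr : ‖ζ‖ ≤ r := by
        simpa using mem_closedBall_zero_iff.1 hζ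
      exact ⟨⟨hz1, hζr.trans_lt hr1⟩, Or.inl h1⟩
    have hdiff : ∀ x ∈ ball (0 : ℂ) r \ (∅ : Set ℂ),
        DifferentiableAt ℂ (fun ζ : ℂ => f (z, ζ)) x := by
      intro x hx
      have hxr : ‖x‖ < r := by
        simpa using mem_ball_zero_iff.1 hx.1
      exact (hfa (z, x) ⟨⟨hz1, hxr.trans hr1⟩, Or.inl h1⟩).comp x
        ((differentiableAt_const z).prodMk differentiableAt_id)
    exact Complex.two_pi_I_inv_smul_circleIntegral_sub_inv_smul_of_differentiable_on_off_countable
      countable_empty hw hcont hdiff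
  -- Step 2 : joint differentiability
  have hFd : ∀ p : ℂ × ℂ, ‖p.1‖ < 1 → ‖p.2‖ < r →
      DifferentiableAt ℂ F p := by
    rintro ⟨z, w⟩ h1 h2
    exact hartogs_aux_diff ε hε0 hε1 f hf z w h1 h2
  -- Step 3 : overlap identity
  have hOv : ∀ z w : ℂ, ‖z‖ < 1 → 1 - ε < ‖w‖ → ‖w‖ < r →
      F (z, w) = f (z, w) := by
    intro z w hz hw1 hw2
    have hmemf : ∀ z' : ℂ, ‖z'‖ < 1 → (z', w) ∈ hartogsFigure ε :=
      fun z' hz' => ⟨⟨hz', hw2.trans hr1⟩, Or.inr hw1⟩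
    have hg : DifferentiableOn ℂ (fun z' => F (z', w) - f (z', w)) (ball (0 : ℂ) 1) := by
      intro z' hz'
      have hz'1 : ‖z'‖ < 1 := by
        simpa using mem_ball_zero_iff.1 hz'
      have hFz : DifferentiableAt ℂ (fun z' => F (z', w)) z' :=
        (hFd (z', w) hz'1 hw2).comp (g := F) z' (differentiableAt_id.prodMk (differentiableAt_const w))
      have hfz : DifferentiableAt ℂ (fun z' => f (z', w)) z' :=
        (hfa (z', w) (hmemf z' hz'1)).comp z'
          (differentiableAt_id.prodMk (differentiableAt_const w))
      exact (hFz.sub hfz).differentiableWithinAt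
    have hev : (fun z' => F (z', w) - f (z', w)) =ᶠ[nhds (0 : ℂ)] 0 := by
      filter_upwards [ball_mem_nhds (0 : ℂ) hε0] with z' hz'
      have hz'ε : ‖z'‖ < ε := by
        simpa using mem_ball_zero_iff.1 hz'
      simp [hFf z' w hz'ε hw2]
    have := ((hg.analyticOnNhd isOpen_ball).eqOn_zero_of_preconnected_of_eventuallyEq_zero
      (convex_ball (0 : ℂ) 1).isPreconnected (mem_ball_self one_pos) hev)
    have hzmem : z ∈ ball (0 : ℂ) 1 := by
      simpa [mem_ball_zero_iff] using hz
    have h0 := this hzmem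
    simpa [sub_eq_zero] using h0
  -- Step 4 : glue
  refine ⟨fun p => if ‖p.2‖ < r then F p else f p, ?_, ?_⟩
  · rintro ⟨z, w⟩ ⟨hz, hw⟩
    by_cases h : ‖w‖ < r
    · have hU : IsOpen {p : ℂ × ℂ | ‖p.2‖ < r} :=
        isOpen_lt (continuous_norm.comp continuous_snd) continuous_const
      have hEv : ∀ᶠ q in nhds ((z, w) : ℂ × ℂ),
          (if ‖q.2‖ < r then F q else f q) = F q := by
        filter_upwards [hU.mem_nhds h] with q hq
        simp [hq]
      exact ((hFd (z, w) hz h).congr_of_eventuallyEq hEv).differentiableWithinAt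
    · push_neg at h
      have hw1 : 1 - ε < ‖w‖ := hrε.trans_le h
      have hV : IsOpen {p : ℂ × ℂ | ‖p.1‖ < 1 ∧ 1 - ε < ‖p.2‖} := by
        exact (isOpen_lt (continuous_norm.comp continuous_fst) continuous_const).inter
          (isOpen_lt continuous_const (continuous_norm.comp continuous_snd))
      have hEv : ∀ᶠ q in nhds ((z, w) : ℂ × ℂ),
          (if ‖q.2‖ < r then F q else f q) = f q := by
        filter_upwards [hV.mem_nhds ⟨hz, hw1⟩] with q hq
        by_cases hq2 : ‖q.2‖ < r
        · simp only [hq2, if_true]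
          exact hOv q.1 q.2 hq.1 hq.2 hq2
        · simp [hq2]
      have hfd : DifferentiableAt ℂ f (z, w) := hfa (z, w) ⟨⟨hz, hw⟩, Or.inr hw1⟩
      exact (hfd.congr_of_eventuallyEq hEv).differentiableWithinAt
  · rintro ⟨z, w⟩ ⟨⟨hz, hw⟩, hor⟩
    by_cases h : ‖w‖ < r
    · simp only [if_pos h]
      rcases hor with h1 | h2
      · exact hFf z w h1 h
      · exact hOv z w hz h2 h
    · simp [h]
end

section
/- Let n ≥ 1 and let k₁, …, k_{2n} be positive integers. Then the product A = B(k₁) · B(k₂) · ⋯ · B(k_{2n}) of the integer matrices B(k) = [[0, 1], [1, k]] satisfies det A = 1 and trace A > 2; in particular A belongs to SL(2, ℤ) and is hyperbolic. -/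
private def Bm (x : ℤ) : Matrix (Fin 2) (Fin 2) ℤ := !![0, 1; 1, x]

private lemma dloussky_aux : ∀ (m : ℕ) (l : List ℤ), l.length = 2 * m + 2 →
    (∀ x ∈ l, 1 ≤ x) →
    (l.map Bm).prod.det = 1 ∧ 1 ≤ (l.map Bm).prod 0 0 ∧ 1 ≤ (l.map Bm).prod 0 1 ∧
      1 ≤ (l.map Bm).prod 1 0 ∧ 2 ≤ (l.map Bm).prod 1 1 := by
  intro m
  induction m with
  | zero =>
    intro l hl hx
    match l, hl with
    | [x, y], _ =>
      have hx1 : 1 ≤ x := hx x (by simp)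
      have hy1 : 1 ≤ y := hx y (by simp)
      simp only [List.map_cons, List.map_nil, List.prod_cons, List.prod_nil, mul_one, Bm]
      rw [Matrix.mul_fin_two]
      refine ⟨by simp [Matrix.det_fin_two_of]; ring, ?_, ?_, ?_, ?_⟩ <;>
        simp <;> nlinarith
  | succ m ih =>
    intro l hl hx
    match l, hl with
    | x :: y :: rest, hl =>
      have hrest : rest.length = 2 * m + 2 := by
        simp only [List.length_cons] at hl; omega
      obtain ⟨hdet, ha, hb, hc, hd⟩ := ih rest hrest (fun z hz => hx z (by simp [hz]))
      have hx1 : 1 ≤ x := hx x (by simp)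
      have hy1 : 1 ≤ y := hx y (by simp)
      set Q := (rest.map Bm).prod with hQ
      have hprod : ((x :: y :: rest).map Bm).prod = Bm x * (Bm y * Q) := by
        simp [List.prod_cons]; rfl
      rw [hprod]
      constructor
      · simp only [Matrix.det_mul, hdet, mul_one, Bm]
        simp [Matrix.det_fin_two_of]
      · have e : (Bm x * (Bm y * Q)) = !![1, y; x, 1 + x * y] * Q := by
          rw [← mul_assoc]
          congr 1
          simp only [Bm]
          ext i j
          fin_cases i <;> fin_cases j <;>
            simp [Matrix.mul_apply, Fin.sum_univ_two]
        rw [e]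
        have hmul : ∀ i j, (!![1, y; x, 1 + x * y] * Q) i j =
            !![1, y; x, 1 + x * y] i 0 * Q 0 j + !![1, y; x, 1 + x * y] i 1 * Q 1 j := by
          intro i j
          rw [Matrix.mul_apply, Fin.sum_univ_two]
        refine ⟨?_, ?_, ?_, ?_⟩ <;> rw [hmul] <;> simp <;>
          nlinarith [mul_nonneg (by linarith : (0:ℤ) ≤ x - 1) (by linarith : (0:ℤ) ≤ Q 0 0 - 1),
            mul_nonneg (by linarith : (0:ℤ) ≤ x - 1) (by linarith : (0:ℤ) ≤ Q 0 1 - 1),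
            mul_nonneg (mul_nonneg (by linarith : (0:ℤ) ≤ x) (by linarith : (0:ℤ) ≤ y)) (by linarith : (0:ℤ) ≤ Q 1 0),
            mul_nonneg (mul_nonneg (by linarith : (0:ℤ) ≤ x) (by linarith : (0:ℤ) ≤ y)) (by linarith : (0:ℤ) ≤ Q 1 1),
            mul_nonneg (by linarith : (0:ℤ) ≤ y) (by linarith : (0:ℤ) ≤ Q 1 0 - 1),
            mul_nonneg (by linarith : (0:ℤ) ≤ y) (by linarith : (0:ℤ) ≤ Q 1 1 - 2)]
  
/-- An even Dloussky matrix, i.e. a product `B(k₁) ⋯ B(k_{2n})` of an even number of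
matrices `B(k) = [[0,1],[1,k]]` with `k` a positive integer, has determinant `1` and
trace `> 2`; in particular it is a hyperbolic element of `SL(2, ℤ)`. -/
theorem even_dloussky_matrix_hyperbolic (n : ℕ) (hn : 1 ≤ n)
    (k : Fin (2 * n) → ℤ) (hk : ∀ i, 0 < k i)
    (A : Matrix (Fin 2) (Fin 2) ℤ)
    (hA : A = (List.ofFn fun i => !![(0 : ℤ), 1; 1, k i]).prod) :
    A.det = 1 ∧ 2 < A.trace := by
  have hA' : A = ((List.ofFn k).map Bm).prod := by
    rw [hA, List.map_ofFn]; rfl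
  obtain ⟨hdet, ha, hb, hc, hd⟩ := dloussky_aux (n - 1) (List.ofFn k)
    (by simp [List.length_ofFn]; omega)
    (by intro x hx'; rw [List.mem_ofFn] at hx'; obtain ⟨i, rfl⟩ := hx'; exact hk i)
  rw [hA']
  refine ⟨hdet, ?_⟩
  rw [Matrix.trace_fin_two]
  omega
end
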